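/- arXiv:1909.02540 — 5 statements merged into one kernel-verified Lean document; each statement's English description precedes it below -/
import Mathlib

section
/- Let F be a nonempty closed set of density matrices on ℂ^d, let ρ be a density matrix on ℂ^d with R_F(ρ) < ∞, and let L : M_d(ℂ) → M_{d'}(ℂ) be a linear map such that Tr(L(τ)) is a nonnegative real number for every density matrix τ on ℂ^d. Then there exists ω ∈ F such that Tr(L(ω)) ≥ Tr(L(ρ))/(1 + R_F(ρ)). (Lemma S3.) -/
open scoped Matrix ComplexOrder

noncomputable section

/-- A density matrix: a positive semidefinite complex matrix with unit trace. -/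
def IsDensity {n : Type*} [Fintype n] (A : Matrix n n ℂ) : Prop :=
  A.PosSemidef ∧ A.trace = 1

/-- The feasible set for the generalized robustness:
`{ s ≥ 0 : ∃ density σ, (ρ + sσ)/(1+s) ∈ F }`.  Its nonemptiness encodes `R_F(ρ) < ∞`. -/
def RobustSet {n : Type*} [Fintype n] (F : Set (Matrix n n ℂ)) (ρ : Matrix n n ℂ) : Set ℝ :=
  {s : ℝ | 0 ≤ s ∧ ∃ σ : Matrix n n ℂ, IsDensity σ ∧ (1 + s)⁻¹ • (ρ + s • σ) ∈ F}

/-- The generalized robustness `R_F(ρ)`. -/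
noncomputable def Robustness {n : Type*} [Fintype n] (F : Set (Matrix n n ℂ))
    (ρ : Matrix n n ℂ) : ℝ :=
  sInf (RobustSet F ρ)

attribute [local instance] Matrix.normedAddCommGroup Matrix.normedSpace

open Matrix in
lemma quad_single {d : ℕ} (A : Matrix (Fin d) (Fin d) ℂ) (i j : Fin d) (a b : ℂ) :
    dotProduct (star (Pi.single i a)) (A *ᵥ Pi.single j b) = star a * (A i j * b) := by
  simp [Matrix.mulVec_single, dotProduct, Pi.single_apply, Pi.star_apply, apply_ite,
    ite_mul, Finset.sum_ite_eq', mul_assoc]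

open Matrix in
lemma density_diag_re {d : ℕ} {A : Matrix (Fin d) (Fin d) ℂ} (hA : IsDensity A) (i : Fin d) :
    0 ≤ (A i i).re ∧ (A i i).im = 0 ∧ (A i i).re ≤ 1 := by
  have hd : ∀ k, 0 ≤ A k k := by
    intro k
    have h := hA.1.dotProduct_mulVec_nonneg (Pi.single k 1)
    rw [quad_single] at h
    simpa using h
  have h1 : ∀ k, 0 ≤ (A k k).re ∧ (A k k).im = 0 := by
    intro k
    have := hd k
    rw [Complex.le_def] at this
    simp at this
    exact ⟨this.1, this.2.symm⟩
  have htr : (∑ k, (A k k).re) = 1 := by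
    have : (A.trace).re = 1 := by rw [hA.2]; simp
    rw [Matrix.trace] at this
    simpa [Complex.re_sum, Matrix.diag] using this
  refine ⟨(h1 i).1, (h1 i).2, ?_⟩
  calc (A i i).re ≤ ∑ k, (A k k).re :=
        Finset.single_le_sum (fun k _ => (h1 k).1) (Finset.mem_univ i)
    _ = 1 := htr

open Matrix in
lemma density_entry_norm_le {d : ℕ} {A : Matrix (Fin d) (Fin d) ℂ} (hA : IsDensity A)
    (i j : Fin d) : ‖A i j‖ ≤ 1 := by
  rcases eq_or_ne i j with rfl | hij
  · obtain ⟨h0, him, h1⟩ := density_diag_re hA i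
    have : A i i = ((A i i).re : ℂ) := Complex.ext (by simp) (by simp [him])
    rw [this, Complex.norm_real, Real.norm_eq_abs, abs_of_nonneg h0]
    exact h1
  · have hji : A j i = starRingEnd ℂ (A i j) := by
      have := congrFun (congrFun hA.1.1 j) i
      simpa [Matrix.conjTranspose_apply] using this.symm
    have hq := hA.1.dotProduct_mulVec_nonneg (Pi.single i 1 + Pi.single j (-(starRingEnd ℂ (A i j))))
    have hexp : dotProduct (star (Pi.single i 1 + Pi.single j (-(starRingEnd ℂ (A i j)))))
        (A *ᵥ (Pi.single i 1 + Pi.single j (-(starRingEnd ℂ (A i j)))))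
        = A i i - (Complex.normSq (A i j) : ℂ) - (Complex.normSq (A i j) : ℂ)
          + (Complex.normSq (A i j) : ℂ) * A j j := by
      rw [star_add, Matrix.mulVec_add, dotProduct_add, add_dotProduct,
        add_dotProduct, quad_single, quad_single, quad_single, quad_single]
      simp only [star_one, one_mul, mul_one, star_neg, hji, Complex.star_def,
        Complex.conj_conj]
      linear_combination (A j j - 2) * Complex.mul_conj (A i j)
    rw [hexp] at hq
    rw [Complex.le_def] at hq
    obtain ⟨h0i, himi, h1i⟩ := density_diag_re hA i
    obtain ⟨h0j, himj, h1j⟩ := density_diag_re hA j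
    have hre : 0 ≤ (A i i).re - Complex.normSq (A i j) - Complex.normSq (A i j)
        + Complex.normSq (A i j) * (A j j).re := by
      have := hq.1
      simpa [Complex.add_re, Complex.sub_re, Complex.mul_re, himj] using this
    have hnsq : Complex.normSq (A i j) ≤ 1 := by nlinarith [Complex.normSq_nonneg (A i j)]
    have : ‖A i j‖ ^ 2 ≤ 1 := by rw [← Complex.sq_norm] at hnsq; exact hnsq
    nlinarith [norm_nonneg (A i j)]

open Matrix in
lemma isClosed_density {d : ℕ} : IsClosed {A : Matrix (Fin d) (Fin d) ℂ | IsDensity A} := by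
  have h1 : IsClosed {A : Matrix (Fin d) (Fin d) ℂ | A.trace = 1} :=
    isClosed_eq (continuous_id.matrix_trace) continuous_const
  have h2 : IsClosed {A : Matrix (Fin d) (Fin d) ℂ | Aᴴ = A} :=
    isClosed_eq (continuous_id.matrix_conjTranspose) continuous_id
  have h3 : ∀ x : Fin d → ℂ, IsClosed {A : Matrix (Fin d) (Fin d) ℂ |
      0 ≤ dotProduct (star x) (A *ᵥ x)} := by
    intro x
    have hcont : Continuous fun A : Matrix (Fin d) (Fin d) ℂ =>
        dotProduct (star x) (A *ᵥ x) :=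
      Continuous.dotProduct continuous_const (continuous_id.matrix_mulVec continuous_const)
    have : {A : Matrix (Fin d) (Fin d) ℂ | 0 ≤ dotProduct (star x) (A *ᵥ x)}
        = (fun A : Matrix (Fin d) (Fin d) ℂ => dotProduct (star x) (A *ᵥ x)) ⁻¹'
          ({z : ℂ | 0 ≤ z.re} ∩ {z : ℂ | z.im = 0}) := by
      ext A
      simp only [Set.mem_setOf_eq, Set.mem_preimage, Set.mem_inter_iff, Complex.le_def]
      constructor
      · rintro ⟨h, h'⟩; exact ⟨by simpa using h, by simpa using h'.symm⟩
      · rintro ⟨h, h'⟩; exact ⟨by simpa using h, by simp [h']⟩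
    rw [this]
    refine IsClosed.preimage hcont (IsClosed.inter ?_ ?_)
    · exact isClosed_le continuous_const Complex.continuous_re
    · exact isClosed_eq Complex.continuous_im continuous_const
  have : {A : Matrix (Fin d) (Fin d) ℂ | IsDensity A}
      = ({A : Matrix (Fin d) (Fin d) ℂ | Aᴴ = A}
        ∩ ⋂ x : Fin d → ℂ, {A | 0 ≤ dotProduct (star x) (A *ᵥ x)})
        ∩ {A | A.trace = 1} := by
    ext A
    simp only [Set.mem_inter_iff, Set.mem_iInter, Set.mem_setOf_eq]
    exact ⟨fun h => ⟨⟨h.1.1, h.1.dotProduct_mulVec_nonneg⟩, h.2⟩, fun h => ⟨.of_dotProduct_mulVec_nonneg h.1.1 h.1.2, h.2⟩⟩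
  rw [this]
  exact ((h2.inter (isClosed_iInter h3)).inter h1)

open Matrix in
lemma isCompact_density {d : ℕ} : IsCompact {A : Matrix (Fin d) (Fin d) ℂ | IsDensity A} := by
  have hproper : ProperSpace (Matrix (Fin d) (Fin d) ℂ) := FiniteDimensional.proper ℝ _
  refine (isCompact_closedBall (0 : Matrix (Fin d) (Fin d) ℂ) 1).of_isClosed_subset
    isClosed_density ?_
  intro A hA
  rw [Metric.mem_closedBall, dist_zero_right]
  rw [Matrix.norm_le_iff (by norm_num)]
  exact fun i j => density_entry_norm_le hA i j

/-- **Lemma S3.**  For any linear map `L` whose trace functional is nonnegative (and real)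
on density matrices, some free state `ω ∈ F` satisfies
`Tr(L(ω)) ≥ Tr(L(ρ))/(1 + R_F(ρ))`. -/
theorem robustness_free_state_trace {d d' : ℕ}
    (F : Set (Matrix (Fin d) (Fin d) ℂ)) (hFne : F.Nonempty) (hFcl : IsClosed F)
    (hFden : ∀ ω ∈ F, IsDensity ω)
    (ρ : Matrix (Fin d) (Fin d) ℂ) (hρ : IsDensity ρ)
    (hRfin : (RobustSet F ρ).Nonempty)
    (L : Matrix (Fin d) (Fin d) ℂ →ₗ[ℂ] Matrix (Fin d') (Fin d') ℂ)
    (hL : ∀ τ : Matrix (Fin d) (Fin d) ℂ, IsDensity τ →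
      0 ≤ ((L τ).trace).re ∧ ((L τ).trace).im = 0) :
    ∃ ω ∈ F, ((L ρ).trace).re / (1 + Robustness F ρ) ≤ ((L ω).trace).re := by
  -- the objective function
  set g : Matrix (Fin d) (Fin d) ℂ → ℝ := fun A => ((L A).trace).re with hg
  have hgcont : Continuous g := by
    have hLc : Continuous L := L.continuous_of_finiteDimensional
    exact Complex.continuous_re.comp (hLc.matrix_trace)
  -- F is compact
  have hFcompact : IsCompact F :=
    isCompact_density.of_isClosed_subset hFcl (fun ω hω => hFden ω hω)
  obtain ⟨ω, hωF, hmax⟩ := hFcompact.exists_isMaxOn hFne hgcont.continuousOn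
  refine ⟨ω, hωF, ?_⟩
  set M := g ω with hM
  set T := ((L ρ).trace).re with hT
  have hT0 : 0 ≤ T := (hL ρ hρ).1
  -- key estimate for each s in the robust set
  have key : ∀ s ∈ RobustSet F ρ, T ≤ (1 + s) * M := by
    rintro s ⟨hs0, σ, hσ, hmem⟩
    have h1s : (0:ℝ) < 1 + s := by linarith
    have hgs : g ((1 + s)⁻¹ • (ρ + s • σ)) = (1 + s)⁻¹ * (T + s * g σ) := by
      have : L ((1 + s)⁻¹ • (ρ + s • σ)) = (1 + s)⁻¹ • (L ρ + s • L σ) := by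
        rw [LinearMap.map_smul_of_tower, map_add, LinearMap.map_smul_of_tower]
      simp only [hg, this, Matrix.trace_smul, Matrix.trace_add]
      rw [Complex.smul_re, Complex.add_re, Complex.smul_re]
      simp [hT]
    have hσ0 : 0 ≤ g σ := (hL σ hσ).1
    have hle : g ((1 + s)⁻¹ • (ρ + s • σ)) ≤ M := hmax hmem
    rw [hgs] at hle
    have : (1 + s)⁻¹ * T ≤ (1 + s)⁻¹ * (T + s * g σ) := by
      apply mul_le_mul_of_nonneg_left _ (le_of_lt (inv_pos.mpr h1s))
      nlinarith
    have h2 : (1 + s)⁻¹ * T ≤ M := le_trans this hle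
    calc T = (1 + s) * ((1 + s)⁻¹ * T) := by field_simp
      _ ≤ (1 + s) * M := by apply mul_le_mul_of_nonneg_left h2 (le_of_lt h1s)
  -- basic facts about the infimum
  have hbdd : BddBelow (RobustSet F ρ) := ⟨0, fun s hs => hs.1⟩
  have hR0 : 0 ≤ Robustness F ρ := le_csInf hRfin (fun s hs => hs.1)
  have h1R : (0:ℝ) < 1 + Robustness F ρ := by linarith
  obtain ⟨s₀, hs₀⟩ := hRfin
  have hM0 : 0 ≤ M := by
    have := key s₀ hs₀
    have h1s : (0:ℝ) < 1 + s₀ := by linarith [hs₀.1]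
    nlinarith
  rw [div_le_iff₀ h1R]
  rcases eq_or_lt_of_le hT0 with hTeq | hTpos
  · nlinarith
  · have hMpos : 0 < M := by
      have := key s₀ hs₀
      have h1s : (0:ℝ) < 1 + s₀ := by linarith [hs₀.1]
      rcases eq_or_lt_of_le hM0 with hMeq | h; · nlinarith
      · exact h
    have hlb : T / M - 1 ≤ Robustness F ρ := by
      apply le_csInf ⟨s₀, hs₀⟩
      intro s hs
      have := key s hs
      rw [div_sub_one (ne_of_gt hMpos), div_le_iff₀ hMpos]
      nlinarith
    have : T / M ≤ 1 + Robustness F ρ := by linarith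
    calc T = (T / M) * M := by field_simp
      _ ≤ (1 + Robustness F ρ) * M := mul_le_mul_of_nonneg_right this hM0
      _ = M * (1 + Robustness F ρ) := by ring
end
end

section
/- Let F be a set of density matrices on ℂ^d, let n ≥ 1, and let F_n be a set of density matrices on ℂ^{d^n} such that ω^{⊗n} ∈ F_n for every ω ∈ F. Then for every density matrix ρ on ℂ^d, 1 + R_{F_n}(ρ^{⊗n}) ≤ (1 + R_F(ρ))^n. (Submultiplicativity of the generalized robustness under tensor powers, as used in the proof of Theorem 2.) -/
open scoped Matrix ComplexOrder

noncomputable section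

/-- The `n`-fold Kronecker power of a `d × d` matrix, realized on the index type
`Fin n → Fin d` (canonically identifying `ℂ^{d^n} ≅ (ℂ^d)^{⊗n}`). -/
noncomputable def kronPow {d : ℕ} (A : Matrix (Fin d) (Fin d) ℂ) (n : ℕ) :
    Matrix (Fin n → Fin d) (Fin n → Fin d) ℂ :=
  Matrix.of fun x y => ∏ i, A (x i) (y i)

open scoped ENNReal

/-- The generalized robustness as an extended real number, with value `∞` when no feasible
`s` exists. -/
noncomputable def eRobustness {n : Type*} [Fintype n] (F : Set (Matrix n n ℂ))
    (ρ : Matrix n n ℂ) : ℝ≥0∞ :=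
  ⨅ s ∈ RobustSet F ρ, ENNReal.ofReal s


section Aux

def prodMat {d n : ℕ} (A : Fin n → Matrix (Fin d) (Fin d) ℂ) :
    Matrix (Fin n → Fin d) (Fin n → Fin d) ℂ :=
  Matrix.of fun x y => ∏ i, A i (x i) (y i)

lemma prodMat_posSemidef {d n : ℕ} (A : Fin n → Matrix (Fin d) (Fin d) ℂ)
    (h : ∀ i, (A i).PosSemidef) : (prodMat A).PosSemidef := by
  choose B hB using fun i => (by
    classical
    open scoped MatrixOrder Matrix.Norms.L2Operator in
    exact CStarAlgebra.nonneg_iff_eq_star_mul_self.mp (h i).nonneg :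
      ∃ B : Matrix (Fin d) (Fin d) ℂ, A i = Bᴴ * B)
  refine (fun (X : Matrix (Fin n → Fin d) (Fin n → Fin d) ℂ) (hX : prodMat A = Xᴴ * X) =>
    hX ▸ Matrix.posSemidef_conjTranspose_mul_self X)
    (Matrix.of fun k x => ∏ i, B i (k i) (x i)) ?_
  ext x y
  simp only [prodMat, Matrix.of_apply, Matrix.mul_apply, Matrix.conjTranspose_apply, hB,
    star_prod]
  rw [Finset.prod_univ_sum]
  simp [Fintype.piFinset_univ, ← Finset.prod_mul_distrib]

lemma prodMat_trace {d n : ℕ} (A : Fin n → Matrix (Fin d) (Fin d) ℂ) :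
    (prodMat A).trace = ∏ i, (A i).trace := by
  simp only [Matrix.trace, Matrix.diag, prodMat, Matrix.of_apply]
  rw [Finset.prod_univ_sum]
  simp [Fintype.piFinset_univ]

lemma kronPow_eq_prodMat {d n : ℕ} (A : Matrix (Fin d) (Fin d) ℂ) :
    kronPow A n = prodMat (fun _ => A) := rfl

lemma real_smul_posSemidef {m : Type*} [Fintype m] {σ : Matrix m m ℂ}
    (hσ : σ.PosSemidef) {s : ℝ} (hs : 0 ≤ s) : (s • σ).PosSemidef := by
  have h : s • σ = ((s : ℂ)) • σ := by
    ext i j; simp [Complex.real_smul]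
  rw [h]
  refine ⟨?_, fun x => ?_⟩
  · unfold Matrix.IsHermitian
    rw [Matrix.conjTranspose_smul]
    simp [Complex.star_def, Complex.conj_ofReal, hσ.1.eq]
  · exact (hσ.smul (by exact_mod_cast Complex.zero_le_real.mpr hs : (0:ℂ) ≤ (s:ℂ))).2 x

lemma kronPow_smul {d n : ℕ} (A : Matrix (Fin d) (Fin d) ℂ) (c : ℝ) :
    kronPow (c • A) n = (c ^ n) • kronPow A n := by
  ext x y
  simp [kronPow, Complex.real_smul, Finset.prod_mul_distrib, mul_comm, mul_pow]

lemma kronPow_trace {d n : ℕ} (A : Matrix (Fin d) (Fin d) ℂ) :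
    (kronPow A n).trace = A.trace ^ n := by
  rw [kronPow_eq_prodMat, prodMat_trace, Finset.prod_const, Finset.card_univ, Fintype.card_fin]

lemma kronPow_density {d n : ℕ} {A : Matrix (Fin d) (Fin d) ℂ} (hA : IsDensity A) :
    IsDensity (kronPow A n) := by
  refine ⟨?_, ?_⟩
  · rw [kronPow_eq_prodMat]; exact prodMat_posSemidef _ (fun _ => hA.1)
  · rw [kronPow_trace, hA.2, one_pow]

/-- Binomial-type expansion of a Kronecker power of a sum. -/
lemma kronPow_add_expand {d n : ℕ} (A B : Matrix (Fin d) (Fin d) ℂ) :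
    kronPow (A + B) n =
      ∑ t : Finset (Fin n), prodMat (fun i => if i ∈ t then B else A) := by
  ext x y
  rw [Matrix.sum_apply]
  simp only [kronPow, prodMat, Matrix.of_apply, Matrix.add_apply]
  calc ∏ i, (A (x i) (y i) + B (x i) (y i))
      = ∑ t : Finset (Fin n), (∏ i ∈ t, B (x i) (y i)) * ∏ i ∈ tᶜ, A (x i) (y i) := by
        simp_rw [add_comm (A _ _)]; exact Fintype.prod_add _ _
    _ = _ := by
        refine Finset.sum_congr rfl fun t _ => ?_
        rw [← Finset.prod_mul_prod_compl t (fun i => (if i ∈ t then B else A) (x i) (y i))]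
        congr 1
        · exact Finset.prod_congr rfl fun i hi => by rw [if_pos hi]
        · exact Finset.prod_congr rfl fun i hi => by
            rw [if_neg (Finset.mem_compl.mp hi)]

lemma sub_kronPow_posSemidef {d n : ℕ} {A B : Matrix (Fin d) (Fin d) ℂ}
    (hA : A.PosSemidef) (hB : B.PosSemidef) :
    (kronPow (A + B) n - kronPow A n).PosSemidef := by
  have hexp := kronPow_add_expand (n := n) A B
  have hterm : ∀ t : Finset (Fin n),
      (prodMat (fun i => if i ∈ t then B else A)).PosSemidef := by
    intro t
    exact prodMat_posSemidef _ (fun i => by by_cases h : i ∈ t <;> simp [h, hA, hB])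
  have hempty : prodMat (fun i : Fin n => if i ∈ (∅ : Finset (Fin n)) then B else A)
      = kronPow A n := by
    ext x y; simp [prodMat, kronPow]
  have : kronPow (A + B) n - kronPow A n
      = ∑ t ∈ Finset.univ.erase (∅ : Finset (Fin n)),
          prodMat (fun i => if i ∈ t then B else A) := by
    rw [hexp, sub_eq_iff_eq_add, ← hempty, Finset.sum_erase_add _ _ (Finset.mem_univ _)]
  rw [this]
  refine Finset.sum_induction _ _ (fun a b ha hb => ha.add hb) Matrix.PosSemidef.zero
    (fun t _ => hterm t)

/-- Key step: from a feasible `s` for `ρ`, `(1+s)^n - 1` is feasible for `ρ^{⊗n}`. -/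
lemma mem_robustSet_kronPow {d n : ℕ} (hn : 1 ≤ n)
    {F : Set (Matrix (Fin d) (Fin d) ℂ)}
    {Fn : Set (Matrix (Fin n → Fin d) (Fin n → Fin d) ℂ)}
    (hFnpow : ∀ ω ∈ F, kronPow ω n ∈ Fn)
    {ρ : Matrix (Fin d) (Fin d) ℂ} (hρ : IsDensity ρ)
    {s : ℝ} (hs : s ∈ RobustSet F ρ) :
    ((1 + s) ^ n - 1) ∈ RobustSet Fn (kronPow ρ n) := by
  obtain ⟨hs0, σ, hσ, hτ⟩ := hs
  have h1s : (0:ℝ) < 1 + s := by linarith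
  have hpow1 : (1:ℝ) ≤ (1 + s) ^ n := one_le_pow₀ (by linarith)
  refine ⟨by linarith, ?_⟩
  rcases eq_or_lt_of_le hs0 with hs0' | hs0'
  · -- s = 0
    subst hs0'
    refine ⟨kronPow ρ n, kronPow_density hρ, ?_⟩
    have hτ' : ρ ∈ F := by simpa using hτ
    have : (1 + ((1 + (0:ℝ)) ^ n - 1))⁻¹ • (kronPow ρ n + ((1 + (0:ℝ)) ^ n - 1) • kronPow ρ n)
        = kronPow ρ n := by simp
    rw [this]
    exact hFnpow _ hτ'
  · -- s > 0
    set S : ℝ := (1 + s) ^ n - 1 with hS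
    have hSpos : 0 < S := by
      have : (1:ℝ) < (1 + s) ^ n := one_lt_pow₀ (by linarith) (by omega)
      simp only [hS]; linarith
    set M : Matrix (Fin n → Fin d) (Fin n → Fin d) ℂ :=
      kronPow (ρ + s • σ) n - kronPow ρ n with hM
    have hMpsd : M.PosSemidef := sub_kronPow_posSemidef hρ.1 (real_smul_posSemidef hσ.1 hs0)
    have hMtr : M.trace = (S : ℂ) := by
      have h1 : (ρ + s • σ).trace = ((1 + s : ℝ) : ℂ) := by
        rw [Matrix.trace_add, Matrix.trace_smul, hρ.2, hσ.2]
        push_cast [Complex.real_smul]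
        ring
      simp only [hM, Matrix.trace_sub, kronPow_trace, h1, hρ.2, one_pow, hS]
      push_cast
      ring
    refine ⟨S⁻¹ • M, ⟨real_smul_posSemidef hMpsd (inv_nonneg.mpr hSpos.le), ?_⟩, ?_⟩
    · rw [Matrix.trace_smul, hMtr, Complex.real_smul]
      rw [← Complex.ofReal_mul, inv_mul_cancel₀ hSpos.ne']
      simp
    · have hSS : S • S⁻¹ • M = M := by
        rw [smul_smul, mul_inv_cancel₀ hSpos.ne', one_smul]
      have h1S : 1 + S = (1 + s) ^ n := by simp [hS]
      have key : (1 + S)⁻¹ • (kronPow ρ n + S • S⁻¹ • M)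
          = kronPow ((1 + s)⁻¹ • (ρ + s • σ)) n := by
        rw [hSS, kronPow_smul, inv_pow, ← h1S]
        congr 1
        rw [hM]; abel
      rw [key]
      exact hFnpow _ hτ

end Aux

/-- Submultiplicativity of the generalized robustness under tensor powers:
`1 + R_{F_n}(ρ^{⊗n}) ≤ (1 + R_F(ρ))^n`. -/
theorem robustness_tensor_power {d : ℕ}
    (F : Set (Matrix (Fin d) (Fin d) ℂ)) (hFden : ∀ ω ∈ F, IsDensity ω)
    (n : ℕ) (hn : 1 ≤ n)
    (Fn : Set (Matrix (Fin n → Fin d) (Fin n → Fin d) ℂ))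
    (hFnden : ∀ ω ∈ Fn, IsDensity ω)
    (hFnpow : ∀ ω ∈ F, kronPow ω n ∈ Fn)
    (ρ : Matrix (Fin d) (Fin d) ℂ) (hρ : IsDensity ρ) :
    1 + eRobustness Fn (kronPow ρ n) ≤ (1 + eRobustness F ρ) ^ n := by
  set g : ℝ≥0∞ → ℝ≥0∞ := fun x => (1 + x) ^ n with hg
  have hgmono : Monotone g := fun a b h => pow_le_pow_left' (add_le_add_right h 1) n
  have hgcont : Continuous g :=
    (ENNReal.continuous_pow n).comp (continuous_const_add 1)
  have hgtop : g ⊤ = ⊤ := by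
    simp only [hg, add_top]
    exact ENNReal.top_pow (by omega)
  have hinf : eRobustness F ρ = sInf (ENNReal.ofReal '' RobustSet F ρ) := by
    rw [eRobustness, sInf_image]
  have hmap : g (eRobustness F ρ) = sInf (g '' (ENNReal.ofReal '' RobustSet F ρ)) := by
    rw [hinf]
    exact hgmono.map_sInf_of_continuousAt hgcont.continuousAt hgtop
  show 1 + eRobustness Fn (kronPow ρ n) ≤ g (eRobustness F ρ)
  rw [hmap]
  refine le_sInf ?_
  rintro _ ⟨_, ⟨x, hx, rfl⟩, rfl⟩
  have hx0 : 0 ≤ x := hx.1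
  have hmem := mem_robustSet_kronPow hn hFnpow hρ hx
  have h1 : eRobustness Fn (kronPow ρ n) ≤ ENNReal.ofReal ((1 + x) ^ n - 1) :=
    iInf₂_le _ hmem
  have hpow1 : (1:ℝ) ≤ (1 + x) ^ n := one_le_pow₀ (by linarith)
  calc 1 + eRobustness Fn (kronPow ρ n)
      ≤ 1 + ENNReal.ofReal ((1 + x) ^ n - 1) := add_le_add_right h1 1
    _ = ENNReal.ofReal (1 + ((1 + x) ^ n - 1)) := by
        rw [ENNReal.ofReal_add (by norm_num) (by linarith), ENNReal.ofReal_one]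
    _ = ENNReal.ofReal ((1 + x) ^ n) := by ring_nf
    _ = (ENNReal.ofReal (1 + x)) ^ n := ENNReal.ofReal_pow (p := 1 + x) (by linarith) n
    _ = (1 + ENNReal.ofReal x) ^ n := by
        rw [ENNReal.ofReal_add (by norm_num) hx0, ENNReal.ofReal_one]
    _ = g (ENNReal.ofReal x) := rfl
end
end

section
/- Let ρ and σ be density matrices on ℂ^d and let p ∈ (0,1] be such that ρ − p·σ is positive semidefinite. If M is a d×d complex matrix with 0 ≤ M ≤ I in the Loewner order and Tr(ρ M) ≥ 1, then Tr(σ M) = 1. Consequently β_0(ρ‖σ) = 1, i.e., D_min(ρ‖σ) := −log β_0(ρ‖σ) = 0. (Key step showing that a channel with a free component has vanishing min-relative entropy to that component, used in the proof of Theorem S1.) -/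
open scoped Matrix ComplexOrder

noncomputable section

/-- The optimal hypothesis-testing error
`β_ε(ρ‖σ) = inf { Tr(M σ) : 0 ≤ M ≤ I, Tr(ρ M) ≥ 1 - ε }`. -/
noncomputable def betaErr {n : Type*} [Fintype n] [DecidableEq n] (ε : ℝ)
    (ρ σ : Matrix n n ℂ) : ℝ :=
  sInf {x : ℝ | ∃ M : Matrix n n ℂ, M.PosSemidef ∧ (1 - M).PosSemidef ∧
    1 - ε ≤ ((ρ * M).trace).re ∧ x = ((σ * M).trace).re}

/-- The hypothesis testing relative entropy `D_H^ε(ρ‖σ) = -log β_ε(ρ‖σ)`. -/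
noncomputable def DH {n : Type*} [Fintype n] [DecidableEq n] (ε : ℝ)
    (ρ σ : Matrix n n ℂ) : ℝ :=
  - Real.log (betaErr ε ρ σ)

lemma psd_trace_re_nonneg {d : ℕ} {A : Matrix (Fin d) (Fin d) ℂ}
    (hA : A.PosSemidef) : 0 ≤ A.trace.re := by
  have h : ∀ i, 0 ≤ (A i i).re := by
    intro i
    have := hA.dotProduct_mulVec_nonneg (Pi.single i 1)
    rw [Complex.le_def] at this
    simpa [dotProduct, Matrix.mulVec, Pi.single_apply, Finset.sum_ite_eq] using this.1
  simp only [Matrix.trace, Matrix.diag, Complex.re_sum]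
  exact Finset.sum_nonneg fun i _ => h i

lemma trace_mul_re_nonneg {d : ℕ} {A B : Matrix (Fin d) (Fin d) ℂ}
    (hA : A.PosSemidef) (hB : B.PosSemidef) : 0 ≤ ((A * B).trace).re := by
  obtain ⟨C, rfl⟩ : ∃ C : Matrix (Fin d) (Fin d) ℂ, A = Cᴴ * C := by
    open scoped MatrixOrder in
    obtain ⟨X, hX, -, hXA⟩ :=
      CFC.exists_sqrt_of_isSelfAdjoint_of_quasispectrumRestricts hA.isHermitian
        (QuasispectrumRestricts.nnreal_of_nonneg hA.nonneg)
    exact ⟨X, by rw [← hXA, ← Matrix.star_eq_conjTranspose, hX.star_eq]⟩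
  have : (Cᴴ * C * B).trace = (C * B * Cᴴ).trace := by
    rw [Matrix.mul_assoc, Matrix.trace_mul_comm, Matrix.mul_assoc]
  rw [this]
  exact psd_trace_re_nonneg (hB.mul_mul_conjTranspose_same C)

/-- If `ρ ≥ p σ` for some `p ∈ (0,1]`, then any feasible test for `β_0(ρ‖σ)` has
`Tr(σ M) = 1`; consequently `β_0(ρ‖σ) = 1`, i.e. `D_min(ρ‖σ) = 0`. -/
theorem Dmin_vanishes_of_free_component {d : ℕ}
    (ρ σ : Matrix (Fin d) (Fin d) ℂ) (hρ : IsDensity ρ) (hσ : IsDensity σ)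
    (p : ℝ) (hp0 : 0 < p) (hp1 : p ≤ 1)
    (hpsd : (ρ - p • σ).PosSemidef) :
    (∀ M : Matrix (Fin d) (Fin d) ℂ, M.PosSemidef → (1 - M).PosSemidef →
      1 ≤ ((ρ * M).trace).re → ((σ * M).trace).re = 1) ∧
    betaErr 0 ρ σ = 1 ∧ DH 0 ρ σ = 0 := by
  have key : ∀ M : Matrix (Fin d) (Fin d) ℂ, M.PosSemidef → (1 - M).PosSemidef →
      1 ≤ ((ρ * M).trace).re → ((σ * M).trace).re = 1 := by
    intro M hM h1M hge
    have expρ : (ρ * (1 - M)).trace = ρ.trace - (ρ * M).trace := by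
      rw [mul_sub, mul_one, Matrix.trace_sub]
    have expσ : (σ * (1 - M)).trace = σ.trace - (σ * M).trace := by
      rw [mul_sub, mul_one, Matrix.trace_sub]
    have ha : 0 ≤ ((ρ * (1 - M)).trace).re := trace_mul_re_nonneg hρ.1 h1M
    have hc : 0 ≤ ((σ * (1 - M)).trace).re := trace_mul_re_nonneg hσ.1 h1M
    have hb : 0 ≤ (((ρ - p • σ) * (1 - M)).trace).re := trace_mul_re_nonneg hpsd h1M
    have haeq : ((ρ * (1 - M)).trace).re = 1 - ((ρ * M).trace).re := by
      rw [expρ, hρ.2]; simp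
    have hceq : ((σ * (1 - M)).trace).re = 1 - ((σ * M).trace).re := by
      rw [expσ, hσ.2]; simp
    have ha0 : ((ρ * (1 - M)).trace).re = 0 := le_antisymm (by rw [haeq]; linarith) ha
    have hbeq : (((ρ - p • σ) * (1 - M)).trace).re
        = ((ρ * (1 - M)).trace).re - p * ((σ * (1 - M)).trace).re := by
      rw [sub_mul, Matrix.trace_sub, Matrix.smul_mul, Matrix.trace_smul]
      simp [Complex.real_smul]
    have : p * ((σ * (1 - M)).trace).re ≤ 0 := by rw [hbeq, ha0] at hb; linarith
    have hc0 : ((σ * (1 - M)).trace).re = 0 :=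
      le_antisymm (nonpos_of_mul_nonpos_right (by linarith [mul_comm p (((σ * (1 - M)).trace).re)]) hp0) hc
    linarith [hceq ▸ hc0]
  refine ⟨key, ?_, ?_⟩
  · have hset : {x : ℝ | ∃ M : Matrix (Fin d) (Fin d) ℂ, M.PosSemidef ∧ (1 - M).PosSemidef ∧
        1 - 0 ≤ ((ρ * M).trace).re ∧ x = ((σ * M).trace).re} = {1} := by
      ext x
      constructor
      · rintro ⟨M, hM, h1M, hge, rfl⟩
        exact key M hM h1M (by linarith)
      · rintro rfl
        exact ⟨1, Matrix.PosSemidef.one, by simpa using (Matrix.PosSemidef.zero :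
          (0 : Matrix (Fin d) (Fin d) ℂ).PosSemidef), by simp [hρ.2], by simp [hσ.2]⟩
    rw [betaErr, hset, csInf_singleton]
  · rw [DH]
    have : betaErr 0 ρ σ = 1 := by
      have hset : {x : ℝ | ∃ M : Matrix (Fin d) (Fin d) ℂ, M.PosSemidef ∧ (1 - M).PosSemidef ∧
          1 - 0 ≤ ((ρ * M).trace).re ∧ x = ((σ * M).trace).re} = {1} := by
        ext x
        constructor
        · rintro ⟨M, hM, h1M, hge, rfl⟩
          exact key M hM h1M (by linarith)
        · rintro rfl
          exact ⟨1, Matrix.PosSemidef.one, by simpa using (Matrix.PosSemidef.zero :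
            (0 : Matrix (Fin d) (Fin d) ℂ).PosSemidef), by simp [hρ.2], by simp [hσ.2]⟩
      rw [betaErr, hset, csInf_singleton]
    rw [this, Real.log_one, neg_zero]
end
end

section
/- Let N, M : M_a(ℂ) → M_b(ℂ) be quantum channels, let s ≥ 1, and let E : M_c(ℂ) → M_{a·s}(ℂ) and D : M_{b·s}(ℂ) → M_e(ℂ) be quantum channels. Define the superchannel Π by Π(X) := D ∘ (X ⊠ id_s) ∘ E for channels X : M_a(ℂ) → M_b(ℂ). Then D_min(Π(N)‖Π(M)) ≤ D_min(N‖M), where D_min(·‖·) on channels is the channel min-relative entropy. (Lemma S4: monotonicity of the channel min-relative entropy under superchannels.) -/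
open scoped Matrix ComplexOrder

noncomputable section

/-- A positive map: it sends positive semidefinite matrices to positive semidefinite matrices. -/
def PosMap {n m : Type*} [Fintype n] [Fintype m]
    (Φ : Matrix n n ℂ →ₗ[ℂ] Matrix m m ℂ) : Prop :=
  ∀ X, X.PosSemidef → (Φ X).PosSemidef

/-- A trace-preserving map. -/
def TracePreserving {n m : Type*} [Fintype n] [Fintype m]
    (Φ : Matrix n n ℂ →ₗ[ℂ] Matrix m m ℂ) : Prop :=
  ∀ X, (Φ X).trace = X.trace

/-- `id_r ⊞ Φ`: the unique linear extension of `Y ⊗ X ↦ Y ⊗ Φ(X)`, realized blockwise on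
the product index type. -/
noncomputable def idTensor {ι κ : Type*} [Fintype ι] [Fintype κ] (r : ℕ)
    (Φ : Matrix ι ι ℂ →ₗ[ℂ] Matrix κ κ ℂ) :
    Matrix (Fin r × ι) (Fin r × ι) ℂ →ₗ[ℂ] Matrix (Fin r × κ) (Fin r × κ) ℂ where
  toFun Z := Matrix.of fun x y => Φ (Matrix.of fun k l => Z (x.1, k) (y.1, l)) x.2 y.2
  map_add' Z W := by
    ext x y
    have h : (Matrix.of fun k l => Z (x.1, k) (y.1, l) + W (x.1, k) (y.1, l)) =
        (Matrix.of fun k l => Z (x.1, k) (y.1, l)) +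
          (Matrix.of fun k l => W (x.1, k) (y.1, l)) := by
      ext k l; rfl
    simp only [Matrix.of_apply, Matrix.add_apply]
    rw [h, map_add]
    rfl
  map_smul' c Z := by
    ext x y
    have h : (Matrix.of fun k l => c • Z (x.1, k) (y.1, l)) =
        c • (Matrix.of fun k l => Z (x.1, k) (y.1, l)) := by
      ext k l; rfl
    simp only [Matrix.of_apply, Matrix.smul_apply, RingHom.id_apply]
    rw [h, map_smul]
    rfl

/-- `Φ ⊞ id_s`: the unique linear extension of `X ⊗ Y ↦ Φ(X) ⊗ Y`, realized blockwise on
the product index type. -/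
noncomputable def tensorId {ι κ : Type*} [Fintype ι] [Fintype κ]
    (Φ : Matrix ι ι ℂ →ₗ[ℂ] Matrix κ κ ℂ) (s : ℕ) :
    Matrix (ι × Fin s) (ι × Fin s) ℂ →ₗ[ℂ] Matrix (κ × Fin s) (κ × Fin s) ℂ where
  toFun Z := Matrix.of fun x y => Φ (Matrix.of fun k l => Z (k, x.2) (l, y.2)) x.1 y.1
  map_add' Z W := by
    ext x y
    have h : (Matrix.of fun k l => Z (k, x.2) (l, y.2) + W (k, x.2) (l, y.2)) =
        (Matrix.of fun k l => Z (k, x.2) (l, y.2)) +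
          (Matrix.of fun k l => W (k, x.2) (l, y.2)) := by
      ext k l; rfl
    simp only [Matrix.of_apply, Matrix.add_apply]
    rw [h, map_add]
    rfl
  map_smul' c Z := by
    ext x y
    have h : (Matrix.of fun k l => c • Z (k, x.2) (l, y.2)) =
        c • (Matrix.of fun k l => Z (k, x.2) (l, y.2)) := by
      ext k l; rfl
    simp only [Matrix.of_apply, Matrix.smul_apply, RingHom.id_apply]
    rw [h, map_smul]
    rfl

/-- Complete positivity: `id_r ⊞ Φ` is positive for every `r`. -/
def CompletelyPos {ι κ : Type*} [Fintype ι] [Fintype κ]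
    (Φ : Matrix ι ι ℂ →ₗ[ℂ] Matrix κ κ ℂ) : Prop :=
  ∀ (r : ℕ) (Z : Matrix (Fin r × ι) (Fin r × ι) ℂ), Z.PosSemidef →
    (idTensor r Φ Z).PosSemidef

/-- A quantum channel: a completely positive trace-preserving linear map. -/
def IsChannel {ι κ : Type*} [Fintype ι] [Fintype κ]
    (Φ : Matrix ι ι ℂ →ₗ[ℂ] Matrix κ κ ℂ) : Prop :=
  CompletelyPos Φ ∧ TracePreserving Φ

open scoped ENNReal

/-- `D_min(ρ‖σ) = -log β_0(ρ‖σ) ∈ [0,∞]` (with value `∞` when `β_0 = 0`). -/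
noncomputable def eDmin {n : Type*} [Fintype n] [DecidableEq n]
    (ρ σ : Matrix n n ℂ) : ℝ≥0∞ :=
  letI := Classical.propDecidable (betaErr 0 ρ σ = 0)
  if betaErr 0 ρ σ = 0 then ⊤ else ENNReal.ofReal (- Real.log (betaErr 0 ρ σ))

/-- The channel min-relative entropy
`D_min(N‖M) = sup_{r ≥ 1, ρ} D_min((id_r ⊞ N)(ρ) ‖ (id_r ⊞ M)(ρ))`. -/
noncomputable def DminCh {ι κ : Type*} [Fintype ι] [Fintype κ] [DecidableEq κ]
    (N M : Matrix ι ι ℂ →ₗ[ℂ] Matrix κ κ ℂ) : ℝ≥0∞ :=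
  ⨆ (r : ℕ) (_ : 1 ≤ r) (ρ : Matrix (Fin r × ι) (Fin r × ι) ℂ) (_ : IsDensity ρ),
    eDmin (idTensor r N ρ) (idTensor r M ρ)


/-! ### Auxiliary lemmas -/

section Aux

set_option linter.unusedSectionVars false

variable {n m : Type*} [Fintype n] [DecidableEq n] [Fintype m] [DecidableEq m]

lemma psd_diag_nonneg {A : Matrix n n ℂ} (hA : A.PosSemidef) (i : n) : 0 ≤ A i i := by
  exact hA.diag_nonneg

lemma psd_trace_nonneg {A : Matrix n n ℂ} (hA : A.PosSemidef) : 0 ≤ A.trace :=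
  Finset.sum_nonneg fun i _ => psd_diag_nonneg hA i

lemma trace_mul_psd_nonneg {A B : Matrix n n ℂ} (hA : A.PosSemidef) (hB : B.PosSemidef) :
    0 ≤ (A * B).trace := by
  obtain ⟨k, v, rfl⟩ := Matrix.posSemidef_iff_eq_sum_vecMulVec.mp hB
  rw [Finset.mul_sum, Matrix.trace_sum]
  refine Finset.sum_nonneg fun i _ => ?_
  rw [Matrix.vecMulVec_eq Unit, ← Matrix.conjTranspose_replicateCol, ← Matrix.mul_assoc,
    Matrix.trace_mul_cycle]
  exact psd_trace_nonneg (hA.conjTranspose_mul_mul_same _)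

lemma trace_mul_psd_re_nonneg {A B : Matrix n n ℂ} (hA : A.PosSemidef) (hB : B.PosSemidef) :
    0 ≤ ((A * B).trace).re := by
  have := trace_mul_psd_nonneg hA hB
  rw [Complex.le_def] at this
  simpa using this.1

lemma posSemidef_outer (v : n → ℂ) : (Matrix.vecMulVec v (star v)).PosSemidef := by
  rw [Matrix.vecMulVec_eq Unit, ← Matrix.conjTranspose_replicateCol]
  exact Matrix.posSemidef_self_mul_conjTranspose _

/-- Decomposition of a standard basis matrix into rank-one positive pieces. -/
lemma stdBasisMatrix_decomp (i j : n) :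
    let v : n → ℂ := fun k => (if k = i then 1 else 0) + (if k = j then 1 else 0)
    let w : n → ℂ := fun k => (if k = i then 1 else 0) - (if k = j then 1 else 0)
    let u : n → ℂ := fun k => (if k = i then 1 else 0) + Complex.I * (if k = j then 1 else 0)
    let z : n → ℂ := fun k => (if k = i then 1 else 0) - Complex.I * (if k = j then 1 else 0)
    Matrix.single i j (1 : ℂ)
      = (1/4 : ℂ) • (Matrix.vecMulVec v (star v) - Matrix.vecMulVec w (star w))
        + (Complex.I/4) • (Matrix.vecMulVec u (star u) - Matrix.vecMulVec z (star z)) ∧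
    Matrix.single j i (1 : ℂ)
      = (1/4 : ℂ) • (Matrix.vecMulVec v (star v) - Matrix.vecMulVec w (star w))
        - (Complex.I/4) • (Matrix.vecMulVec u (star u) - Matrix.vecMulVec z (star z)) := by
  intro v w u z
  constructor <;>
  · ext k l
    simp only [Matrix.single, Matrix.of_apply, Matrix.add_apply, Matrix.sub_apply,
      Matrix.smul_apply, Matrix.vecMulVec_apply, Pi.star_apply, v, w, u, z, smul_eq_mul,
      RCLike.star_def, map_add, map_sub, map_mul, map_one, map_zero, Complex.conj_I,
      apply_ite (starRingEnd ℂ)]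
    by_cases hki : k = i <;> by_cases hkj : k = j <;> by_cases hli : l = i <;>
      by_cases hlj : l = j <;>
      simp only [hki, hkj, hli, hlj, if_true, if_false, and_self, if_neg, ite_true, ite_false] <;>
      simp_all [eq_comm] <;> (try ring_nf) <;> (try simp [Complex.I_sq]) <;> (try ring) <;> tauto

set_option linter.unreachableTactic false
set_option linter.unnecessarySeqFocus false
set_option linter.unusedTactic false

/-- A positive map is real: it commutes with conjugate transpose. -/
lemma PosMap.conjTranspose_map {Φ : Matrix n n ℂ →ₗ[ℂ] Matrix m m ℂ} (hΦ : PosMap Φ)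
    (X : Matrix n n ℂ) : Φ Xᴴ = (Φ X)ᴴ := by
  have key : ∀ i j : n, Φ (Matrix.single j i (1 : ℂ))
      = (Φ (Matrix.single i j (1 : ℂ)))ᴴ := by
    intro i j
    obtain ⟨h1, h2⟩ := stdBasisMatrix_decomp i j
    set v : n → ℂ := fun k => (if k = i then 1 else 0) + (if k = j then 1 else 0) with hv
    set w : n → ℂ := fun k => (if k = i then 1 else 0) - (if k = j then 1 else 0) with hw
    set u : n → ℂ := fun k => (if k = i then 1 else 0) + Complex.I * (if k = j then 1 else 0)
      with hu
    set z : n → ℂ := fun k => (if k = i then 1 else 0) - Complex.I * (if k = j then 1 else 0)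
      with hz
    have Hv := (hΦ _ (posSemidef_outer v)).1.eq
    have Hw := (hΦ _ (posSemidef_outer w)).1.eq
    have Hu := (hΦ _ (posSemidef_outer u)).1.eq
    have Hz := (hΦ _ (posSemidef_outer z)).1.eq
    rw [h1, h2]
    simp only [map_add, map_sub, map_smul, Matrix.conjTranspose_add, Matrix.conjTranspose_sub,
      Matrix.conjTranspose_smul, Hv, Hw, Hu, Hz, Complex.star_def, map_div₀, Complex.conj_I,
      map_one, map_ofNat]
    module
  rw [Matrix.matrix_eq_sum_single X]
  simp only [Matrix.conjTranspose_sum, map_sum]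
  refine Finset.sum_congr rfl fun i _ => Finset.sum_congr rfl fun j _ => ?_
  have h1 : Matrix.single i j (X i j) = (X i j) • Matrix.single i j (1 : ℂ) := by
    rw [Matrix.smul_single]; simp
  have h2 : (Matrix.single i j (X i j))ᴴ
      = (starRingEnd ℂ (X i j)) • Matrix.single j i (1 : ℂ) := by
    ext k l
    simp [Matrix.single, Matrix.conjTranspose_apply, and_comm]
    aesop
  rw [h2, map_smul, key i j, h1, map_smul, Matrix.conjTranspose_smul]
  rfl


/-- The (Hilbert–Schmidt) adjoint of a map, w.r.t. the bilinear trace pairing. -/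
noncomputable def adjMap (Φ : Matrix n n ℂ →ₗ[ℂ] Matrix m m ℂ) (M : Matrix m m ℂ) :
    Matrix n n ℂ :=
  Matrix.of fun i j => (Φ (Matrix.single j i (1 : ℂ)) * M).trace

lemma trace_mul_expand (A B : Matrix n n ℂ) :
    (A * B).trace = ∑ i, ∑ j, A i j * B j i := by
  simp [Matrix.trace, Matrix.diag, Matrix.mul_apply]

lemma stdBasisMatrix_conjT (i j : n) :
    (Matrix.single i j (1 : ℂ))ᴴ = Matrix.single j i (1 : ℂ) := by
  ext k l
  simp [Matrix.single, Matrix.conjTranspose_apply, and_comm]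

lemma trace_mul_adjMap (Φ : Matrix n n ℂ →ₗ[ℂ] Matrix m m ℂ) (A : Matrix n n ℂ)
    (M : Matrix m m ℂ) : (A * adjMap Φ M).trace = (Φ A * M).trace := by
  conv_rhs => rw [Matrix.matrix_eq_sum_single A]
  rw [map_sum, Finset.sum_mul, Matrix.trace_sum, trace_mul_expand]
  refine Finset.sum_congr rfl fun i _ => ?_
  rw [map_sum, Finset.sum_mul, Matrix.trace_sum]
  refine Finset.sum_congr rfl fun j _ => ?_
  have h1 : Matrix.single i j (A i j) = (A i j) • Matrix.single i j (1 : ℂ) := by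
    rw [Matrix.smul_single]; simp
  rw [h1, map_smul, Matrix.smul_mul, Matrix.trace_smul]
  rfl

lemma adjMap_posSemidef {Φ : Matrix n n ℂ →ₗ[ℂ] Matrix m m ℂ} (hΦ : PosMap Φ)
    {M : Matrix m m ℂ} (hM : M.PosSemidef) : (adjMap Φ M).PosSemidef := by
  rw [Matrix.posSemidef_iff_dotProduct_mulVec]
  constructor
  · ext i j
    show star ((adjMap Φ M) j i) = (adjMap Φ M) i j
    have : star ((Φ (Matrix.single i j (1 : ℂ)) * M).trace)
        = ((Φ (Matrix.single i j (1 : ℂ)) * M)ᴴ).trace := by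
      rw [Matrix.trace_conjTranspose]
    rw [show (adjMap Φ M) j i = (Φ (Matrix.single i j (1 : ℂ)) * M).trace from rfl,
      this, Matrix.conjTranspose_mul, hM.1.eq, ← hΦ.conjTranspose_map, stdBasisMatrix_conjT,
      Matrix.trace_mul_comm]
    rfl
  · intro x
    have h : star x ⬝ᵥ (adjMap Φ M) *ᵥ x
        = ((Matrix.vecMulVec x (star x)) * adjMap Φ M).trace := by
      rw [trace_mul_expand]
      simp only [dotProduct, Matrix.mulVec, Matrix.vecMulVec_apply, Pi.star_apply,
        dotProduct, Finset.mul_sum]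
      rw [Finset.sum_comm]
      refine Finset.sum_congr rfl fun i _ => Finset.sum_congr rfl fun j _ => ?_
      ring
    rw [h, trace_mul_adjMap]
    exact trace_mul_psd_nonneg (hΦ _ (posSemidef_outer x)) hM

lemma adjMap_one {Φ : Matrix n n ℂ →ₗ[ℂ] Matrix m m ℂ} (hΦ : TracePreserving Φ) :
    adjMap Φ 1 = 1 := by
  ext i j
  show (Φ (Matrix.single j i (1 : ℂ)) * 1).trace = (1 : Matrix n n ℂ) i j
  rw [mul_one, hΦ]
  by_cases h : i = j
  · subst h
    simp [Matrix.trace, Matrix.diag, Matrix.single, Matrix.one_apply]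
  · simp only [Matrix.trace, Matrix.diag, Matrix.single, Matrix.of_apply,
      Matrix.one_apply, if_neg h]
    simp [fun x : n => show ¬(j = x ∧ i = x) from fun hc => h (hc.2.trans hc.1.symm)]


lemma adjMap_sub (Φ : Matrix n n ℂ →ₗ[ℂ] Matrix m m ℂ) (M M' : Matrix m m ℂ) :
    adjMap Φ (M - M') = adjMap Φ M - adjMap Φ M' := by
  ext i j
  simp [adjMap, Matrix.mul_sub]

lemma betaErr_nonneg {A B : Matrix n n ℂ} (hB : B.PosSemidef) : 0 ≤ betaErr 0 A B := by
  apply Real.sInf_nonneg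
  rintro x ⟨Mt, hMt, -, -, rfl⟩
  exact trace_mul_psd_re_nonneg hB hMt

/-- Data processing for the hypothesis-testing quantity `β₀`. -/
lemma betaErr_le_map {Φ : Matrix n n ℂ →ₗ[ℂ] Matrix m m ℂ} (hpos : PosMap Φ)
    (htp : TracePreserving Φ) {A B : Matrix n n ℂ} (hB : B.PosSemidef)
    (hA : A.trace = 1) : betaErr 0 A B ≤ betaErr 0 (Φ A) (Φ B) := by
  apply csInf_le_csInf
  · exact ⟨0, by rintro x ⟨Mt, hMt, -, -, rfl⟩; exact trace_mul_psd_re_nonneg hB hMt⟩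
  · refine ⟨((Φ B * 1).trace).re, 1, Matrix.PosSemidef.one, by simp [Matrix.PosSemidef.zero], ?_, rfl⟩
    rw [mul_one, htp A, hA]
    norm_num
  · rintro x ⟨Mt, hMt1, hMt2, hMt3, rfl⟩
    refine ⟨adjMap Φ Mt, adjMap_posSemidef hpos hMt1, ?_, ?_, ?_⟩
    · have : (1 : Matrix n n ℂ) - adjMap Φ Mt = adjMap Φ (1 - Mt) := by
        rw [adjMap_sub, adjMap_one htp]
      rw [this]
      exact adjMap_posSemidef hpos hMt2
    · rw [trace_mul_adjMap]; exact hMt3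
    · rw [trace_mul_adjMap]

lemma eDmin_le_of_betaErr {n' : Type*} [Fintype n'] [DecidableEq n']
    {A B : Matrix n n ℂ} {A' B' : Matrix n' n' ℂ}
    (h0 : 0 ≤ betaErr 0 A B) (h : betaErr 0 A B ≤ betaErr 0 A' B') :
    eDmin A' B' ≤ eDmin A B := by
  unfold eDmin
  by_cases h1 : betaErr 0 A B = 0
  · simp [h1]
  · have hpos : 0 < betaErr 0 A B := lt_of_le_of_ne h0 (Ne.symm h1)
    have h2 : betaErr 0 A' B' ≠ 0 := ne_of_gt (lt_of_lt_of_le hpos h)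
    simp only [h1, h2, if_false]
    apply ENNReal.ofReal_le_ofReal
    have := Real.log_le_log hpos h
    linarith

lemma trace_submatrix_equiv' {e : m ≃ n} (A : Matrix n n ℂ) :
    (A.submatrix e e).trace = A.trace := by
  simp only [Matrix.trace, Matrix.diag, Matrix.submatrix_apply]
  exact Equiv.sum_comp e (fun j => A j j)

lemma trace_reindex_mul {e : n ≃ m} (C D : Matrix n n ℂ) :
    (((Matrix.reindex e e) C) * ((Matrix.reindex e e) D)).trace = (C * D).trace := by
  rw [Matrix.reindex_apply, Matrix.reindex_apply, Matrix.submatrix_mul_equiv,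
    trace_submatrix_equiv']

lemma one_sub_reindex {e : n ≃ m} (Mt : Matrix n n ℂ) :
    (1 : Matrix m m ℂ) - (Matrix.reindex e e) Mt = (Matrix.reindex e e) (1 - Mt) := by
  ext i j
  simp only [Matrix.sub_apply, Matrix.reindex_apply, Matrix.submatrix_apply, Matrix.one_apply,
    EmbeddingLike.apply_eq_iff_eq]

lemma testSet_subset (e : n ≃ m) (A B : Matrix n n ℂ) :
    {x : ℝ | ∃ Mt : Matrix n n ℂ, Mt.PosSemidef ∧ (1 - Mt).PosSemidef ∧
      1 - 0 ≤ ((A * Mt).trace).re ∧ x = ((B * Mt).trace).re}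
    ⊆ {x : ℝ | ∃ Mt : Matrix m m ℂ, Mt.PosSemidef ∧ (1 - Mt).PosSemidef ∧
      1 - 0 ≤ ((((Matrix.reindex e e) A) * Mt).trace).re ∧
      x = ((((Matrix.reindex e e) B) * Mt).trace).re} := by
  rintro x ⟨Mt, h1, h2, h3, rfl⟩
  refine ⟨(Matrix.reindex e e) Mt, ?_, ?_, ?_, ?_⟩
  · rw [Matrix.reindex_apply]
    exact (Matrix.posSemidef_submatrix_equiv e.symm).mpr h1
  · rw [one_sub_reindex, Matrix.reindex_apply]
    exact (Matrix.posSemidef_submatrix_equiv e.symm).mpr h2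
  · rw [trace_reindex_mul]; exact h3
  · rw [trace_reindex_mul]

lemma betaErr_reindex {e : n ≃ m} (A B : Matrix n n ℂ) :
    betaErr 0 ((Matrix.reindex e e) A) ((Matrix.reindex e e) B) = betaErr 0 A B := by
  unfold betaErr
  refine congrArg sInf (Set.Subset.antisymm ?_ (testSet_subset e A B))
  have h := testSet_subset e.symm ((Matrix.reindex e e) A) ((Matrix.reindex e e) B)
  simpa using h

lemma eDmin_reindex {e : n ≃ m} (A B : Matrix n n ℂ) :
    eDmin ((Matrix.reindex e e) A) ((Matrix.reindex e e) B) = eDmin A B := by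
  unfold eDmin
  rw [betaErr_reindex]

lemma TracePreserving.idTensor {ι κ : Type*} [Fintype ι] [Fintype κ] (r : ℕ)
    {Φ : Matrix ι ι ℂ →ₗ[ℂ] Matrix κ κ ℂ} (h : TracePreserving Φ) :
    TracePreserving (_root_.idTensor r Φ) := by
  intro Z
  have hblk : ∀ x1 : Fin r,
      ∑ x2, Φ (Matrix.of fun k l => Z (x1, k) (x1, l)) x2 x2
        = ∑ k, Z (x1, k) (x1, k) := by
    intro x1
    simpa [Matrix.trace, Matrix.diag] using h (Matrix.of fun k l => Z (x1, k) (x1, l))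
  simp only [Matrix.trace, Matrix.diag, _root_.idTensor, LinearMap.coe_mk, AddHom.coe_mk,
    Matrix.of_apply]
  rw [Fintype.sum_prod_type]
  simp only [hblk]
  exact (Fintype.sum_prod_type (fun x : Fin r × ι => Z x x)).symm

lemma idTensor_comp {ι κ μ : Type*} [Fintype ι] [Fintype κ] [Fintype μ] (r : ℕ)
    (F : Matrix κ κ ℂ →ₗ[ℂ] Matrix μ μ ℂ) (G : Matrix ι ι ℂ →ₗ[ℂ] Matrix κ κ ℂ) :
    idTensor r (F ∘ₗ G) = idTensor r F ∘ₗ idTensor r G := by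
  apply LinearMap.ext
  intro Z
  rfl

/-- The index equivalence `Fin r × (Fin n × Fin s) ≃ Fin (r * s) × Fin n`. -/
def mixEquiv (r s d : ℕ) : (Fin r × (Fin d × Fin s)) ≃ (Fin (r * s) × Fin d) :=
  ((Equiv.refl (Fin r)).prodCongr (Equiv.prodComm (Fin d) (Fin s))).trans <|
    (Equiv.prodAssoc (Fin r) (Fin s) (Fin d)).symm.trans <|
      finProdFinEquiv.prodCongr (Equiv.refl (Fin d))

lemma idTensor_tensorId_reindex {d d' : ℕ} (r s : ℕ)
    (X : Matrix (Fin d) (Fin d) ℂ →ₗ[ℂ] Matrix (Fin d') (Fin d') ℂ)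
    (τ : Matrix (Fin r × (Fin d × Fin s)) (Fin r × (Fin d × Fin s)) ℂ) :
    idTensor (r * s) X ((Matrix.reindex (mixEquiv r s d) (mixEquiv r s d)) τ)
      = (Matrix.reindex (mixEquiv r s d') (mixEquiv r s d'))
          (idTensor r (tensorId X s) τ) := by
  ext ⟨u, p⟩ ⟨v, q⟩
  simp only [idTensor, tensorId, LinearMap.coe_mk, AddHom.coe_mk, Matrix.of_apply,
    Matrix.reindex_apply, Matrix.submatrix_apply, mixEquiv, Equiv.symm_trans_apply,
    Equiv.prodCongr_symm, Equiv.prodCongr_apply, Equiv.symm_symm, Equiv.prodAssoc_apply,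
    Equiv.refl_symm, Equiv.coe_refl, Prod.map, Equiv.prodComm_symm, Equiv.prodComm_apply,
    Equiv.prodAssoc_symm_apply, id_eq, Prod.swap_prod_mk]

end Aux

/-- **Lemma S4.**  Monotonicity of the channel min-relative entropy under superchannels
`Π(X) = D ∘ (X ⊞ id_s) ∘ E`. -/
theorem channel_Dmin_monotone {a b c e s : ℕ} (hs : 1 ≤ s)
    (N M : Matrix (Fin a) (Fin a) ℂ →ₗ[ℂ] Matrix (Fin b) (Fin b) ℂ)
    (hN : IsChannel N) (hM : IsChannel M)
    (E : Matrix (Fin c) (Fin c) ℂ →ₗ[ℂ] Matrix (Fin a × Fin s) (Fin a × Fin s) ℂ)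
    (hE : IsChannel E)
    (D : Matrix (Fin b × Fin s) (Fin b × Fin s) ℂ →ₗ[ℂ] Matrix (Fin e) (Fin e) ℂ)
    (hD : IsChannel D) :
    DminCh (D ∘ₗ tensorId N s ∘ₗ E) (D ∘ₗ tensorId M s ∘ₗ E) ≤ DminCh N M := by
  refine iSup_le fun r => iSup_le fun hr => iSup_le fun ρ => iSup_le fun hρ => ?_
  obtain ⟨hρpsd, hρtr⟩ := hρ
  set τ : Matrix (Fin r × (Fin a × Fin s)) (Fin r × (Fin a × Fin s)) ℂ := idTensor r E ρ
    with hτdef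
  have hτpsd : τ.PosSemidef := hE.1 r ρ hρpsd
  have hτtr : τ.trace = 1 := by rw [hτdef, TracePreserving.idTensor r hE.2 ρ, hρtr]
  set ρ' : Matrix (Fin (r * s) × Fin a) (Fin (r * s) × Fin a) ℂ :=
    (Matrix.reindex (mixEquiv r s a) (mixEquiv r s a)) τ with hρ'def
  have hρ'psd : ρ'.PosSemidef := by
    rw [hρ'def, Matrix.reindex_apply]
    exact (Matrix.posSemidef_submatrix_equiv (mixEquiv r s a).symm).mpr hτpsd
  have hρ'tr : ρ'.trace = 1 := by
    rw [hρ'def, Matrix.reindex_apply, trace_submatrix_equiv', hτtr]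
  have keyN := idTensor_tensorId_reindex r s N τ
  have keyM := idTensor_tensorId_reindex r s M τ
  rw [← hρ'def] at keyN keyM
  set XN := idTensor r (tensorId N s) τ with hXN
  set XM := idTensor r (tensorId M s) τ with hXM
  have compN : idTensor r (D ∘ₗ tensorId N s ∘ₗ E) ρ = idTensor r D XN := by
    rw [idTensor_comp, idTensor_comp]
    rfl
  have compM : idTensor r (D ∘ₗ tensorId M s ∘ₗ E) ρ = idTensor r D XM := by
    rw [idTensor_comp, idTensor_comp]
    rfl
  have hXMpsd : XM.PosSemidef := by
    have h1 := hM.1 (r * s) ρ' hρ'psd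
    rw [keyM, Matrix.reindex_apply] at h1
    exact (Matrix.posSemidef_submatrix_equiv (mixEquiv r s b).symm).mp h1
  have hXNtr : XN.trace = 1 := by
    have h2 : (idTensor (r * s) N ρ').trace = 1 := by
      rw [TracePreserving.idTensor (r * s) hN.2 ρ', hρ'tr]
    rw [keyN, Matrix.reindex_apply, trace_submatrix_equiv'] at h2
    exact h2
  calc eDmin (idTensor r (D ∘ₗ tensorId N s ∘ₗ E) ρ) (idTensor r (D ∘ₗ tensorId M s ∘ₗ E) ρ)
      = eDmin (idTensor r D XN) (idTensor r D XM) := by rw [compN, compM]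
    _ ≤ eDmin XN XM :=
        eDmin_le_of_betaErr (betaErr_nonneg hXMpsd)
          (betaErr_le_map (hD.1 r) (TracePreserving.idTensor r hD.2) hXMpsd hXNtr)
    _ = eDmin (idTensor (r * s) N ρ') (idTensor (r * s) M ρ') := by
        rw [keyN, keyM, eDmin_reindex]
    _ ≤ DminCh N M := by
        have hrs : 1 ≤ r * s := by
          calc 1 = 1 * 1 := (one_mul 1).symm
          _ ≤ r * s := Nat.mul_le_mul hr hs
        exact le_iSup_of_le (r * s) (le_iSup_of_le hrs (le_iSup_of_le ρ'
          (le_iSup_of_le ⟨hρ'psd, hρ'tr⟩ (le_refl _))))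
end
end

section
/- Let O be a set of quantum channels from M_a(ℂ) to M_b(ℂ) and O' a set of quantum channels from M_c(ℂ) to M_c(ℂ). Let s ≥ 1 and let E : M_c(ℂ) → M_{a·s}(ℂ) and D : M_{b·s}(ℂ) → M_c(ℂ) be quantum channels, and define the superchannel Π(X) := D ∘ (X ⊠ id_s) ∘ E for channels X : M_a(ℂ) → M_b(ℂ). Suppose: (i) N = p·E_f + (1 − p)·M, where E_f ∈ O, M is a quantum channel from M_a(ℂ) to M_b(ℂ), and 0 < p ≤ 1 (so N has a free component); (ii) Π(E_f) ∈ O'; and (iii) U is a c×c unitary matrix whose unitary channel Ad_U(X) := U X U† satisfies Ad_U ∉ O'. Then Π(N) ≠ Ad_U. (Theorem S1: no free superchannel can transform a channel with a free component into a unitary resource channel.) -/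
open scoped Matrix ComplexOrder

noncomputable section

/-- The unitary channel `Ad_U : X ↦ U X U†`. -/
noncomputable def adU {c : ℕ} (U : Matrix (Fin c) (Fin c) ℂ) :
    Matrix (Fin c) (Fin c) ℂ →ₗ[ℂ] Matrix (Fin c) (Fin c) ℂ where
  toFun X := U * X * Uᴴ
  map_add' X Y := by
    show U * (X + Y) * Uᴴ = U * X * Uᴴ + U * Y * Uᴴ
    rw [Matrix.mul_add, Matrix.add_mul]
  map_smul' r X := by
    show U * (r • X) * Uᴴ = r • (U * X * Uᴴ)
    rw [Matrix.mul_smul, Matrix.smul_mul]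

open Matrix in
/-- Scalar multiplication by a nonnegative real preserves positive semidefiniteness. -/
lemma psdSmulReal {n : Type*} [Fintype n] {A : Matrix n n ℂ} (hA : A.PosSemidef)
    {p : ℝ} (hp : 0 ≤ p) : ((p : ℂ) • A).PosSemidef := by
  rw [posSemidef_iff_dotProduct_mulVec]
  refine ⟨?_, fun x => ?_⟩
  · show ((p : ℂ) • A)ᴴ = _
    rw [conjTranspose_smul, hA.1.eq]
    congr 1
    simp [Complex.ext_iff]
  · rw [smul_mulVec, dotProduct_smul, smul_eq_mul]
    exact mul_nonneg (by exact_mod_cast hp) (hA.dotProduct_mulVec_nonneg x)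

open Matrix in
lemma tensorId_tp {ι κ : Type*} [Fintype ι] [Fintype κ]
    (Φ : Matrix ι ι ℂ →ₗ[ℂ] Matrix κ κ ℂ) (hΦ : TracePreserving Φ) (s : ℕ) :
    TracePreserving (tensorId Φ s) := by
  intro Z
  have key : ∀ j : Fin s, ∑ m : κ, Φ (Matrix.of fun k l => Z (k, j) (l, j)) m m
      = ∑ k : ι, Z (k, j) (k, j) := fun j => hΦ (Matrix.of fun k l => Z (k, j) (l, j))
  show ∑ x : κ × Fin s, Φ (Matrix.of fun k l => Z (k, x.2) (l, x.2)) x.1 x.1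
      = ∑ x : ι × Fin s, Z x x
  rw [Fintype.sum_prod_type, Fintype.sum_prod_type, Finset.sum_comm,
    Finset.sum_comm (γ := ι)]
  exact Finset.sum_congr rfl fun j _ => key j

open Matrix in
lemma tensorId_pos {ι κ : Type*} [Fintype ι] [Fintype κ]
    (Φ : Matrix ι ι ℂ →ₗ[ℂ] Matrix κ κ ℂ) (hΦ : CompletelyPos Φ) (s : ℕ) :
    PosMap (tensorId Φ s) := by
  intro Z hZ
  have h1 : (Z.submatrix (Prod.swap : Fin s × ι → ι × Fin s) Prod.swap).PosSemidef :=
    hZ.submatrix _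
  have h2 := hΦ s _ h1
  have h3 := h2.submatrix (Prod.swap : κ × Fin s → Fin s × κ)
  have he : tensorId Φ s Z =
      (idTensor s Φ (Z.submatrix (Prod.swap : Fin s × ι → ι × Fin s) Prod.swap)).submatrix
        (Prod.swap : κ × Fin s → Fin s × κ) Prod.swap := by
    ext x y
    rfl
  rw [he]
  exact h3

open Matrix in
lemma cp_posMap {ι κ : Type*} [Fintype ι] [Fintype κ]
    (Φ : Matrix ι ι ℂ →ₗ[ℂ] Matrix κ κ ℂ) (hΦ : CompletelyPos Φ) : PosMap Φ := by
  intro X hX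
  have h1 : (X.submatrix (Prod.snd : Fin 1 × ι → ι) Prod.snd).PosSemidef := hX.submatrix _
  have h2 := hΦ 1 _ h1
  have h3 := h2.submatrix (fun m : κ => ((0 : Fin 1), m))
  have he : Φ X = (idTensor 1 Φ (X.submatrix (Prod.snd : Fin 1 × ι → ι) Prod.snd)).submatrix
      (fun m : κ => ((0 : Fin 1), m)) (fun m : κ => ((0 : Fin 1), m)) := by
    ext x y
    rfl
  rw [he]
  exact h3

open Matrix in
lemma tensorId_combo {ι κ : Type*} [Fintype ι] [Fintype κ]
    (Φ Ψ : Matrix ι ι ℂ →ₗ[ℂ] Matrix κ κ ℂ) (α β : ℂ) (s : ℕ) :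
    tensorId (α • Φ + β • Ψ) s = α • tensorId Φ s + β • tensorId Ψ s := by
  refine LinearMap.ext fun Z => ?_
  ext x y
  simp [tensorId]

open Matrix in
lemma vecMulVec_mulVec' {n : Type*} [Fintype n] (w y x : n → ℂ) :
    vecMulVec w y *ᵥ x = (y ⬝ᵥ x) • w := by
  ext i
  simp only [Matrix.mulVec, dotProduct, vecMulVec_apply, Pi.smul_apply, smul_eq_mul,
    mul_assoc, ← Finset.mul_sum]
  ring

open Matrix in
/-- Rank-one domination: a PSD matrix dominated by a rank-one projector is proportional to it. -/
lemma rankOne_dominate {n : Type*} [Fintype n] [DecidableEq n]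
    (w : n → ℂ) (hw : star w ⬝ᵥ w = 1) (A : Matrix n n ℂ) (hA : A.PosSemidef)
    (hPA : (vecMulVec w (star w) - A).PosSemidef) :
    A = (star w ⬝ᵥ A *ᵥ w) • vecMulVec w (star w) := by
  set P := vecMulVec w (star w) with hP
  have hker : ∀ y : n → ℂ, star w ⬝ᵥ y = 0 → A *ᵥ y = 0 := by
    intro y hy
    have h1 : star y ⬝ᵥ P *ᵥ y = 0 := by
      rw [hP, vecMulVec_mulVec', dotProduct_smul, hy, smul_eq_mul, zero_mul]
    have h2 := hPA.dotProduct_mulVec_nonneg y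
    rw [Matrix.sub_mulVec, dotProduct_sub, h1, zero_sub] at h2
    have h4 : star y ⬝ᵥ A *ᵥ y = 0 := le_antisymm (neg_nonneg.mp h2) (hA.dotProduct_mulVec_nonneg y)
    exact (hA.dotProduct_mulVec_zero_iff y).mp h4
  set lam := star w ⬝ᵥ A *ᵥ w with hlam
  have hAw : A *ᵥ w = lam • w := by
    set z := A *ᵥ w - lam • w with hz
    have hwz : star w ⬝ᵥ z = 0 := by
      rw [hz, dotProduct_sub, dotProduct_smul, hw, smul_eq_mul, mul_one, sub_self]
    have hAz : A *ᵥ z = 0 := hker z hwz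
    have hzA : star z ᵥ* A = 0 := by
      have h5 : star (A *ᵥ z) = star z ᵥ* A := by rw [Matrix.star_mulVec, hA.1.eq]
      rw [← h5, hAz, star_zero]
    have hzw : star z ⬝ᵥ w = 0 := by
      have h6 : star z ⬝ᵥ w = star (star w ⬝ᵥ z) := by
        simp [dotProduct, mul_comm]
      rw [h6, hwz, star_zero]
    have hzz : star z ⬝ᵥ z = 0 := by
      conv_lhs => rw [hz]
      rw [dotProduct_sub, Matrix.dotProduct_mulVec, hzA, zero_dotProduct,
        dotProduct_smul, hzw, smul_eq_mul, mul_zero, sub_zero]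
    have hz0 : z = 0 := dotProduct_star_self_eq_zero.mp hzz
    have := sub_eq_zero.mp hz0
    exact this
  have hall : ∀ x : n → ℂ, A *ᵥ x = (lam • P) *ᵥ x := by
    intro x
    have hy : star w ⬝ᵥ (x - (star w ⬝ᵥ x) • w) = 0 := by
      rw [dotProduct_sub, dotProduct_smul, hw, smul_eq_mul, mul_one, sub_self]
    have hdec : A *ᵥ x = (star w ⬝ᵥ x) • (A *ᵥ w) := by
      conv_lhs => rw [show x = (star w ⬝ᵥ x) • w + (x - (star w ⬝ᵥ x) • w) by ring_nf]
      rw [Matrix.mulVec_add, Matrix.mulVec_smul, hker _ hy, add_zero]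
    rw [hdec, hAw, Matrix.smul_mulVec, hP, vecMulVec_mulVec', smul_comm]
  ext i j
  have h7 := congrFun (hall (Pi.single j 1)) i
  simpa using h7

open Matrix in
/-- A linear map on matrices vanishing on all `v v*` vanishes identically. -/
lemma linMap_zero_of_rankOne {n m : Type*} [Fintype n] [DecidableEq n] [Fintype m]
    (F : Matrix n n ℂ →ₗ[ℂ] Matrix m m ℂ)
    (h : ∀ v : n → ℂ, F (vecMulVec v (star v)) = 0) : F = 0 := by
  have hcross : ∀ u z : n → ℂ, F (vecMulVec u (star z)) = 0 := by
    have hsum : ∀ u z : n → ℂ,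
        F (vecMulVec u (star z)) + F (vecMulVec z (star u)) = 0 := by
      intro u z
      have hexp : vecMulVec (u + z) (star (u + z)) =
          vecMulVec u (star u) + vecMulVec u (star z) +
            vecMulVec z (star u) + vecMulVec z (star z) := by
        ext i j
        simp only [vecMulVec_apply, Matrix.add_apply, Pi.star_apply, Pi.add_apply, star_add]
        ring
      have := h (u + z)
      rw [hexp] at this
      simp only [map_add, h u, h z, zero_add, add_zero] at this
      exact this
    intro u z
    have h1 := hsum u z
    have h2 := hsum u (Complex.I • z)
    have e1 : vecMulVec u (star (Complex.I • z)) = (-Complex.I) • vecMulVec u (star z) := by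
      ext i j
      simp [vecMulVec_apply]
      ring
    have e2 : vecMulVec (Complex.I • z) (star u) = Complex.I • vecMulVec z (star u) := by
      ext i j
      simp [vecMulVec_apply]
      ring
    rw [e1, e2, F.map_smul, F.map_smul] at h2
    -- h2 : -I • F(uz*) + I • F(zu*) = 0  →  F(zu*) = F(uz*)
    have h3 : F (vecMulVec z (star u)) = F (vecMulVec u (star z)) := by
      have h4 := congrArg (fun X => Complex.I • X) h2
      simp only [smul_add, smul_smul, smul_zero] at h4
      have : Complex.I * -Complex.I = 1 := by rw [mul_neg, Complex.I_mul_I, neg_neg]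
      rw [this] at h4
      have h5 : Complex.I * Complex.I = -1 := Complex.I_mul_I
      rw [h5] at h4
      have h6 : (1 : ℂ) • F (vecMulVec u (star z)) + (-1 : ℂ) • F (vecMulVec z (star u)) = 0 := h4
      simp only [one_smul, neg_one_smul] at h6
      linear_combination (norm := module) -h6
    rw [h3] at h1
    have : (2 : ℂ) • F (vecMulVec u (star z)) = 0 := by
      rw [two_smul]; exact h1
    simpa using (smul_eq_zero.mp this).resolve_left (by norm_num)
  refine LinearMap.ext fun X => ?_
  rw [LinearMap.zero_apply]
  conv_lhs => rw [matrix_eq_sum_single X]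
  rw [map_sum]
  refine Finset.sum_eq_zero fun i _ => ?_
  rw [map_sum]
  refine Finset.sum_eq_zero fun j _ => ?_
  have hstd : single i j (X i j) =
      vecMulVec (Pi.single i (X i j)) (star (Pi.single j (1 : ℂ))) := by
    ext a b
    by_cases ha : a = i <;> by_cases hb : b = j
    · simp [single, vecMulVec_apply, Pi.single_apply, ha, hb]
    · have hb' : j ≠ b := fun h' => hb h'.symm
      simp [single, vecMulVec_apply, Pi.single_apply, ha, hb, hb']
    · have ha' : i ≠ a := fun h' => ha h'.symm
      simp [single, vecMulVec_apply, Pi.single_apply, ha, ha']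
    · have ha' : i ≠ a := fun h' => ha h'.symm
      simp [single, vecMulVec_apply, Pi.single_apply, ha, hb, ha']
  rw [hstd]
  exact hcross _ _
open Matrix in
lemma adU_vecMulVec {c : ℕ} (U : Matrix (Fin c) (Fin c) ℂ) (v : Fin c → ℂ) :
    adU U (vecMulVec v (star v)) = vecMulVec (U *ᵥ v) (star (U *ᵥ v)) := by
  show U * vecMulVec v (star v) * Uᴴ = _
  rw [vecMulVec_eq Unit, vecMulVec_eq Unit, Matrix.star_mulVec, Matrix.replicateCol_mulVec,
    Matrix.replicateRow_vecMul]
  simp only [Matrix.mul_assoc]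

open Matrix in
lemma trace_vecMulVec_star {n : Type*} [Fintype n] (v : n → ℂ) :
    (vecMulVec v (star v)).trace = star v ⬝ᵥ v := by
  simp [Matrix.trace, Matrix.diag, vecMulVec_apply, dotProduct, mul_comm]

open Matrix in
lemma psd_vecMulVec_star {n : Type*} [Fintype n] (v : n → ℂ) :
    (vecMulVec v (star v)).PosSemidef := by
  rw [vecMulVec_eq Unit, ← Matrix.conjTranspose_replicateCol]
  exact Matrix.posSemidef_self_mul_conjTranspose _

/-- **Theorem S1.**  No free superchannel `Π(X) = D ∘ (X ⊞ id_s) ∘ E` can transform a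
channel with a free component into a unitary resource channel. -/
theorem no_go_channel_purification {a b c s : ℕ} (hs : 1 ≤ s)
    (O : Set (Matrix (Fin a) (Fin a) ℂ →ₗ[ℂ] Matrix (Fin b) (Fin b) ℂ))
    (hO : ∀ Φ ∈ O, IsChannel Φ)
    (O' : Set (Matrix (Fin c) (Fin c) ℂ →ₗ[ℂ] Matrix (Fin c) (Fin c) ℂ))
    (hO' : ∀ Φ ∈ O', IsChannel Φ)
    (E : Matrix (Fin c) (Fin c) ℂ →ₗ[ℂ] Matrix (Fin a × Fin s) (Fin a × Fin s) ℂ)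
    (hE : IsChannel E)
    (D : Matrix (Fin b × Fin s) (Fin b × Fin s) ℂ →ₗ[ℂ] Matrix (Fin c) (Fin c) ℂ)
    (hD : IsChannel D)
    (N Ef M : Matrix (Fin a) (Fin a) ℂ →ₗ[ℂ] Matrix (Fin b) (Fin b) ℂ)
    (hEfO : Ef ∈ O) (hMch : IsChannel M)
    (p : ℝ) (hp0 : 0 < p) (hp1 : p ≤ 1)
    (hdecomp : N = (p : ℂ) • Ef + ((1 - p : ℝ) : ℂ) • M)
    (hPiEf : (D ∘ₗ tensorId Ef s ∘ₗ E) ∈ O')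
    (U : Matrix (Fin c) (Fin c) ℂ) (hU : U * Uᴴ = 1 ∧ Uᴴ * U = 1)
    (hUres : adU U ∉ O') :
    (D ∘ₗ tensorId N s ∘ₗ E) ≠ adU U := by
  intro h
  have hEfch := hO Ef hEfO
  have hposE := cp_posMap E hE.1
  have hposD := cp_posMap D hD.1
  have hposEf := tensorId_pos Ef hEfch.1 s
  have hposM := tensorId_pos M hMch.1 s
  have hsum : ∀ X, D (tensorId N s (E X)) =
      (p : ℂ) • D (tensorId Ef s (E X)) + ((1 - p : ℝ) : ℂ) • D (tensorId M s (E X)) := by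
    intro X
    rw [hdecomp, tensorId_combo]
    simp
  -- agreement on unit rank-one projectors
  have key : ∀ v : Fin c → ℂ, star v ⬝ᵥ v = 1 →
      D (tensorId Ef s (E (Matrix.vecMulVec v (star v)))) =
        adU U (Matrix.vecMulVec v (star v)) := by
    intro v hv
    set ψ := Matrix.vecMulVec v (star v) with hψ
    have hψpsd : ψ.PosSemidef := psd_vecMulVec_star v
    have hψtr : ψ.trace = 1 := by rw [hψ, trace_vecMulVec_star, hv]
    set w := U *ᵥ v with hwdef
    have hwunit : star w ⬝ᵥ w = 1 := by
      rw [hwdef, Matrix.star_mulVec, Matrix.dotProduct_mulVec, Matrix.vecMul_vecMul, hU.2,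
        Matrix.vecMul_one, hv]
    have hAd : adU U ψ = Matrix.vecMulVec w (star w) := adU_vecMulVec U v
    have happ : D (tensorId N s (E ψ)) = adU U ψ := by
      have := DFunLike.congr_fun h ψ
      simpa using this
    set A := D (tensorId Ef s (E ψ)) with hA
    have hApsd : A.PosSemidef := hposD _ (hposEf _ (hposE _ hψpsd))
    have hAtr : A.trace = 1 := by
      rw [hA, hD.2, tensorId_tp Ef hEfch.2 s, hE.2, hψtr]
    have hBpsd : (D (tensorId M s (E ψ))).PosSemidef := hposD _ (hposM _ (hposE _ hψpsd))
    have heq : (p : ℂ) • A + ((1 - p : ℝ) : ℂ) • D (tensorId M s (E ψ))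
        = Matrix.vecMulVec w (star w) := by
      rw [← hsum ψ, happ, hAd]
    have hsub : (Matrix.vecMulVec w (star w) - (p : ℂ) • A).PosSemidef := by
      have hre : Matrix.vecMulVec w (star w) - (p : ℂ) • A
          = ((1 - p : ℝ) : ℂ) • D (tensorId M s (E ψ)) := by
        rw [← heq]
        abel
      rw [hre]
      exact psdSmulReal hBpsd (by linarith)
    have hdom := rankOne_dominate w hwunit _ (psdSmulReal hApsd hp0.le) hsub
    have hlam : star w ⬝ᵥ ((p : ℂ) • A) *ᵥ w = (p : ℂ) := by
      have htr := congrArg Matrix.trace hdom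
      rw [Matrix.trace_smul, Matrix.trace_smul, trace_vecMulVec_star, hwunit, hAtr] at htr
      simpa using htr.symm
    rw [hlam] at hdom
    have hcancel : A = Matrix.vecMulVec w (star w) := by
      have hpne : (p : ℂ) ≠ 0 := by
        simpa using hp0.ne'
      exact smul_right_injective _ hpne hdom
    rw [hcancel, hAd]
  -- agreement on all rank-one matrices
  have key2 : ∀ v : Fin c → ℂ,
      D (tensorId Ef s (E (Matrix.vecMulVec v (star v)))) =
        adU U (Matrix.vecMulVec v (star v)) := by
    intro v
    by_cases hv : v = 0
    · subst hv
      have h0 : Matrix.vecMulVec (0 : Fin c → ℂ) (star (0 : Fin c → ℂ)) = 0 := by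
        ext i j
        simp [Matrix.vecMulVec_apply]
      rw [h0]
      simp
    · set R : ℝ := ∑ i, Complex.normSq (v i) with hR
      have hRpos : 0 < R := by
        obtain ⟨i, hi⟩ := Function.ne_iff.mp hv
        exact Finset.sum_pos' (fun j _ => Complex.normSq_nonneg _)
          ⟨i, Finset.mem_univ i, Complex.normSq_pos.mpr hi⟩
      set α : ℝ := (Real.sqrt R)⁻¹ with hα
      have hαα : α * α = R⁻¹ := by
        rw [hα, ← mul_inv]
        rw [Real.mul_self_sqrt hRpos.le]
      set u : Fin c → ℂ := (α : ℂ) • v with hu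
      have hdots : ∀ x : Fin c → ℂ, star x ⬝ᵥ x = ((∑ i, Complex.normSq (x i) : ℝ) : ℂ) := by
        intro x
        push_cast
        exact Finset.sum_congr rfl fun i _ => (Complex.normSq_eq_conj_mul_self).symm ▸ rfl
      have huunit : star u ⬝ᵥ u = 1 := by
        rw [hdots u]
        have hnu : ∀ i, Complex.normSq (u i) = α * α * Complex.normSq (v i) := by
          intro i
          rw [hu]
          simp [Complex.normSq_mul, Complex.normSq_ofReal]
        simp_rw [hnu, hαα]
        rw [← Finset.mul_sum, ← hR, inv_mul_cancel₀ hRpos.ne']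
        norm_num
      have hcast : (R : ℂ) * ((α : ℂ) * (α : ℂ)) = 1 := by
        have : R * (α * α) = 1 := by
          rw [hαα, mul_inv_cancel₀ hRpos.ne']
        exact_mod_cast this
      have hscale : Matrix.vecMulVec v (star v) = (R : ℂ) • Matrix.vecMulVec u (star u) := by
        ext i j
        simp only [Matrix.smul_apply, Matrix.vecMulVec_apply, Pi.star_apply, hu, Pi.smul_apply,
          smul_eq_mul, star_mul', Complex.star_def, Complex.conj_ofReal]
        linear_combination (-(v i * (starRingEnd ℂ) (v j))) * hcast
      rw [hscale, map_smul, map_smul, map_smul, map_smul, key u huunit]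
  -- conclude the two linear maps are equal
  have hF : (D ∘ₗ tensorId Ef s ∘ₗ E) - adU U = 0 := by
    apply linMap_zero_of_rankOne
    intro v
    simp only [LinearMap.sub_apply, LinearMap.comp_apply]
    rw [key2 v, sub_self]
  have hfinal : (D ∘ₗ tensorId Ef s ∘ₗ E) = adU U := sub_eq_zero.mp hF
  exact hUres (hfinal ▸ hPiEf)
end
end
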